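/- For all colorings σ, τ ∈ [q]^V that are both proper colorings of G, the transition probabilities of the Local Glauber dynamics satisfy the symmetry P(σ, τ) = P(τ, σ). -/

import Mathlib

open Finset

attribute [local instance] Classical.propDecidable

namespace LocalGlauber

variable {V : Type*} [Fintype V] [DecidableEq V]

/-- A coloring is proper if adjacent vertices get different colors. -/
def IsProper (G : SimpleGraph V) {q : ℕ} (σ : V → Fin q) : Prop :=
  ∀ ⦃x y : V⦄, G.Adj x y → σ x ≠ σ y

/-- The acceptance condition of the Local Glauber dynamics at node `v`, given the
current coloring `σ` and the proposals `c` (with `c u = σ u` for unmarked nodes):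
`c v ∉ ⋃_{u ∈ N(v)} {σ u, c u}` and `c u ∉ {σ v, c v}` for every neighbor `u`. -/
def Accept (G : SimpleGraph V) {q : ℕ} (σ c : V → Fin q) (v : V) : Prop :=
  ∀ u : V, G.Adj v u → c v ≠ σ u ∧ c v ≠ c u ∧ c u ≠ σ v ∧ c u ≠ c v

/-- One step of the Local Glauber dynamics, given proposals `c`
(nodes with `c v = σ v`, in particular unmarked nodes, never change state). -/
noncomputable def glauberStep (G : SimpleGraph V) {q : ℕ} (σ c : V → Fin q) : V → Fin q :=
  fun v => if Accept G σ c v then c v else σ v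

/-- Probability weight of the random choice `(m, c)`: each node is marked (`m v = true`)
independently with probability `γ`; a marked node proposes a uniform color in `[q]`;
an unmarked node proposes its current color. -/
noncomputable def glauberWeight {q : ℕ} (γ : ℝ) (σ : V → Fin q) (m : V → Bool)
    (c : V → Fin q) : ℝ :=
  ∏ v : V, (if m v then γ / q else if c v = σ v then 1 - γ else 0)

/-- Transition matrix of the Local Glauber dynamics. -/
noncomputable def P (G : SimpleGraph V) (q : ℕ) (γ : ℝ) (σ τ : V → Fin q) : ℝ :=
  ∑ m : V → Bool, ∑ c : V → Fin q,
    if glauberStep G σ c = τ then glauberWeight γ σ m c else 0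

/-- `t`-step iterate of the transition matrix. -/
noncomputable def Pt (G : SimpleGraph V) (q : ℕ) (γ : ℝ) : ℕ → (V → Fin q) → (V → Fin q) → ℝ
  | 0 => fun σ τ => if σ = τ then 1 else 0
  | t + 1 => fun σ τ => ∑ ρ : V → Fin q, Pt G q γ t σ ρ * P G q γ ρ τ

/-- Uniform distribution over the proper `q`-colorings of `G`. -/
noncomputable def uniformProper (G : SimpleGraph V) (q : ℕ) (σ : V → Fin q) : ℝ :=
  if IsProper G σ then
    1 / ((univ.filter (fun τ : V → Fin q => IsProper G τ)).card : ℝ)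
  else 0

/-- Total variation distance between two distributions on a finite set. -/
noncomputable def dTV {Ω : Type*} [Fintype Ω] (μ ν : Ω → ℝ) : ℝ :=
  (1 / 2) * ∑ x : Ω, |μ x - ν x|

end LocalGlauber

open LocalGlauber in
lemma local_glauber_key {V : Type*} [Fintype V] [DecidableEq V]
    (G : SimpleGraph V) {q : ℕ} (σ τ : V → Fin q) (hσ : IsProper G σ)
    (c : V → Fin q) (h : glauberStep G σ c = τ) :
    glauberStep G τ (fun v => Equiv.swap (σ v) (τ v) (c v)) = σ := by
  funext v
  have hτv : τ v = if Accept G σ c v then c v else σ v := by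
    rw [← h]; rfl
  by_cases hv : Accept G σ c v
  · -- accepted: τ v = c v, proposal back is σ v
    have hτv' : τ v = c v := by rw [hτv, if_pos hv]
    have hc'v : Equiv.swap (σ v) (τ v) (c v) = σ v := by
      rw [hτv']; exact Equiv.swap_apply_right _ _
    have hacc : Accept G τ (fun w => Equiv.swap (σ w) (τ w) (c w)) v := by
      intro u hadj
      obtain ⟨h1, h2, h3, h4⟩ := hv u hadj
      have hτu : τ u = if Accept G σ c u then c u else σ u := by rw [← h]; rfl
      by_cases hu : Accept G σ c u
      · have hτu' : τ u = c u := by rw [hτu, if_pos hu]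
        have hc'u : Equiv.swap (σ u) (τ u) (c u) = σ u := by
          rw [hτu']; exact Equiv.swap_apply_right _ _
        simp only [hc'v, hc'u]
        rw [hτu', hτv']
        exact ⟨fun e => h3 e.symm, hσ hadj, fun e => h1 e.symm, hσ hadj.symm⟩
      · have hτu' : τ u = σ u := by rw [hτu, if_neg hu]
        have hc'u : Equiv.swap (σ u) (τ u) (c u) = c u := by
          rw [hτu', Equiv.swap_self]; rfl
        simp only [hc'v, hc'u]
        rw [hτu', hτv']
        exact ⟨hσ hadj, fun e => h3 e.symm, fun e => h2 e.symm, h3⟩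
    simp only [glauberStep, if_pos hacc, hc'v]
  · -- rejected: τ v = σ v
    have hτv' : τ v = σ v := by rw [hτv, if_neg hv]
    have hc'v : Equiv.swap (σ v) (τ v) (c v) = c v := by
      rw [hτv', Equiv.swap_self]; rfl
    have hnacc : ¬ Accept G τ (fun w => Equiv.swap (σ w) (τ w) (c w)) v := by
      intro hacc
      apply hv
      intro u hadj
      have hτu : τ u = if Accept G σ c u then c u else σ u := by rw [← h]; rfl
      by_cases hu : Accept G σ c u
      · obtain ⟨h1, h2, h3, h4⟩ := hu v hadj.symm
        exact ⟨h3, h4, h1, h2⟩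
      · have hτu' : τ u = σ u := by rw [hτu, if_neg hu]
        have hc'u : Equiv.swap (σ u) (τ u) (c u) = c u := by
          rw [hτu', Equiv.swap_self]; rfl
        obtain ⟨h1, h2, h3, h4⟩ := hacc u hadj
        simp only [hc'v, hc'u] at h1 h2 h3 h4
        rw [hτu'] at h1
        rw [hτv'] at h3
        exact ⟨h1, h2, h3, h4⟩
    simp only [glauberStep, if_neg hnacc, hτv']

open LocalGlauber in
/-- For proper colorings `σ, τ`, the Local Glauber dynamics is symmetric:
`P(σ, τ) = P(τ, σ)`. -/
theorem local_glauber_symmetric {V : Type*} [Fintype V] [DecidableEq V]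
    (G : SimpleGraph V) (q : ℕ) (γ : ℝ) (hγ0 : 0 < γ) (hγ1 : γ < 1)
    (σ τ : V → Fin q) (hσ : IsProper G σ) (hτ : IsProper G τ) :
    P G q γ σ τ = P G q γ τ σ := by
  unfold P
  refine Finset.sum_congr rfl fun m _ => ?_
  refine Fintype.sum_equiv (Equiv.piCongrRight (fun v => Equiv.swap (σ v) (τ v))) _ _
    fun c => ?_
  have hinv : ∀ v, Equiv.swap (τ v) (σ v)
      ((Equiv.piCongrRight (fun w => Equiv.swap (σ w) (τ w))) c v) = c v := by
    intro v
    simp [Equiv.piCongrRight, Equiv.swap_comm (σ v) (τ v)]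
  have hiff : glauberStep G σ c = τ ↔
      glauberStep G τ ((Equiv.piCongrRight (fun w => Equiv.swap (σ w) (τ w))) c) = σ := by
    constructor
    · intro h
      have := local_glauber_key G σ τ hσ c h
      convert this using 2
      rfl
    · intro h
      have := local_glauber_key G τ σ hτ _ h
      rw [show (fun v => Equiv.swap (τ v) (σ v)
          ((Equiv.piCongrRight (fun w => Equiv.swap (σ w) (τ w))) c v)) = c
        from funext hinv] at this
      exact this
  have hw : glauberWeight γ σ m c =
      glauberWeight γ τ m ((Equiv.piCongrRight (fun w => Equiv.swap (σ w) (τ w))) c) := by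
    unfold glauberWeight
    refine Finset.prod_congr rfl fun v _ => ?_
    by_cases hm : m v
    · simp [hm]
    · have : (Equiv.piCongrRight (fun w => Equiv.swap (σ w) (τ w))) c v = τ v ↔
          c v = σ v := by
        simp [Equiv.piCongrRight]
        constructor
        · intro h
          have := (Equiv.swap (σ v) (τ v)).injective
            (h.trans (Equiv.swap_apply_left (σ v) (τ v)).symm)
          exact this
        · intro h; rw [h]; exact Equiv.swap_apply_left _ _
      simp only [hm, if_false, this]
  by_cases hc : glauberStep G σ c = τ
  · rw [if_pos hc, if_pos (hiff.mp hc), hw]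
  · rw [if_neg hc, if_neg (fun h => hc (hiff.mpr h))]
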